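/- Every open τ-cover of a set X of real numbers contains a countable subfamily which is a τ-cover of X. -/

import Mathlib

open Set

/-- `𝒰` is an open cover of `X`: a family of open sets whose union contains `X`,
with `X` itself not a member. -/
def IsOpenCover (X : Set ℝ) (𝒰 : Set (Set ℝ)) : Prop :=
  (∀ U ∈ 𝒰, IsOpen U) ∧ X ⊆ ⋃₀ 𝒰 ∧ X ∉ 𝒰

/-- A large cover: an open cover each of whose points belongs to infinitely many members. -/
def IsLargeCover (X : Set ℝ) (𝒰 : Set (Set ℝ)) : Prop :=
  IsOpenCover X 𝒰 ∧ ∀ x ∈ X, {U ∈ 𝒰 | x ∈ U}.Infinite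

/-- A γ-cover: an infinite open cover such that each point of `X` belongs to all but
finitely many members. -/
def IsGammaCover (X : Set ℝ) (𝒰 : Set (Set ℝ)) : Prop :=
  IsOpenCover X 𝒰 ∧ 𝒰.Infinite ∧ ∀ x ∈ X, {U ∈ 𝒰 | x ∉ U}.Finite

/-- An ω-cover: an open cover such that every finite subset of `X` is contained in some member. -/
def IsOmegaCover (X : Set ℝ) (𝒰 : Set (Set ℝ)) : Prop :=
  IsOpenCover X 𝒰 ∧ ∀ F : Set ℝ, F.Finite → F ⊆ X → ∃ U ∈ 𝒰, F ⊆ U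

/-- A τ-cover: a large cover such that for all `x, y ∈ X`, at least one of
`{U ∈ 𝒰 | x ∈ U, y ∉ U}` and `{U ∈ 𝒰 | y ∈ U, x ∉ U}` is finite. -/
def IsTauCover (X : Set ℝ) (𝒰 : Set (Set ℝ)) : Prop :=
  IsLargeCover X 𝒰 ∧
    ∀ x ∈ X, ∀ y ∈ X,
      {U ∈ 𝒰 | x ∈ U ∧ y ∉ U}.Finite ∨ {U ∈ 𝒰 | y ∈ U ∧ x ∉ U}.Finite

/-- Every open τ-cover of a set `X` of reals contains a countable subfamily which is
a τ-cover of `X`. -/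
theorem tau_cover_has_countable_tau_subcover (X : Set ℝ) (𝒰 : Set (Set ℝ))
    (h : IsTauCover X 𝒰) :
    ∃ 𝒱 ⊆ 𝒰, 𝒱.Countable ∧ IsTauCover X 𝒱 := by
  classical
  obtain ⟨b, hbc, hbne, hbasis⟩ := TopologicalSpace.exists_countable_basis ℝ
  obtain ⟨⟨⟨hopen, hcov, hXnot⟩, hlarge⟩, htau⟩ := h
  set UB : Set ℝ → Set (Set ℝ) := fun B => {U ∈ 𝒰 | B ⊆ U} with hUB
  set W : Set ℝ → Set (Set ℝ) := fun B =>
    if hB : (UB B).Infinite then Set.range (fun n => ((Set.Infinite.natEmbedding _ hB) n : Set ℝ))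
    else UB B with hW
  have hWsub : ∀ B, W B ⊆ UB B := by
    intro B U hU
    by_cases hB : (UB B).Infinite
    · simp only [hW, dif_pos hB] at hU
      obtain ⟨n, rfl⟩ := hU
      exact (Set.Infinite.natEmbedding _ hB n).2
    · simpa [hW, dif_neg hB] using hU
  have hWcount : ∀ B, (W B).Countable := by
    intro B
    by_cases hB : (UB B).Infinite
    · simp only [hW, dif_pos hB]; exact Set.countable_range _
    · simp only [hW, dif_neg hB]
      exact (Set.not_infinite.mp hB).countable
  set 𝒱 := ⋃ B ∈ b, W B with h𝒱
  have h𝒱sub : 𝒱 ⊆ 𝒰 := by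
    intro U hU
    simp only [h𝒱, mem_iUnion] at hU
    obtain ⟨B, hB, hUW⟩ := hU
    exact (hWsub B hUW).1
  have h𝒱count : 𝒱.Countable := hbc.biUnion fun B _ => hWcount B
  have hkey : ∀ x ∈ X, {U ∈ 𝒱 | x ∈ U}.Infinite := by
    intro x hx
    by_cases hcase : ∃ B ∈ b, x ∈ B ∧ (UB B).Infinite
    · obtain ⟨B, hBb, hxB, hBinf⟩ := hcase
      have hWinf : (W B).Infinite := by
        simp only [hW, dif_pos hBinf]
        exact Set.infinite_range_of_injective
          (fun m n hmn => (Set.Infinite.natEmbedding _ hBinf).injective (Subtype.val_injective hmn))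
      apply hWinf.mono
      intro U hU
      exact ⟨mem_biUnion hBb hU, (hWsub B hU).2 hxB⟩
    · push_neg at hcase
      apply (hlarge x hx).mono
      intro U hU
      obtain ⟨hU𝒰, hxU⟩ := hU
      obtain ⟨B, hBb, hxB, hBU⟩ := hbasis.exists_subset_of_mem_open hxU (hopen U hU𝒰)
      have hfin : ¬ (UB B).Infinite := Set.not_infinite.mpr (hcase B hBb hxB)
      have hUW : U ∈ W B := by
        simp only [hW, dif_neg hfin]; exact ⟨hU𝒰, hBU⟩
      exact ⟨mem_biUnion hBb hUW, hxU⟩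
  refine ⟨𝒱, h𝒱sub, h𝒱count,
    ⟨⟨fun U hU => hopen U (h𝒱sub hU), ?_, fun hX => hXnot (h𝒱sub hX)⟩, hkey⟩, ?_⟩
  · intro x hx
    obtain ⟨U, hU⟩ := (hkey x hx).nonempty
    exact ⟨U, hU.1, hU.2⟩
  · intro x hx y hy
    rcases htau x hx y hy with hf | hf
    · exact Or.inl (hf.subset fun U hU => ⟨h𝒱sub hU.1, hU.2⟩)
    · exact Or.inr (hf.subset fun U hU => ⟨h𝒱sub hU.1, hU.2⟩)
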